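/- Let (G_A, G_M) be the pair of graphs constructed from an input graph H with n = |V(H)| as follows: V(G_A) = V(H) ∪ X ∪ {a,b} where |X| = n, with edge set E(complement of H) ∪ (all pairs within X) ∪ {edges from a to all of V(H) ∪ X} ∪ {edges from b to all of V(H)}; V(G_M) = V(C) ∪ Y ∪ {p,q} where C is an n-cycle and |Y| = n, with edge set E(C) ∪ (all pairs within Y) ∪ (all pairs between Y and V(C) ∪ {q}) ∪ {{p,q}}. If H has a Hamiltonian circuit, then (G_A, G_M) is not almighty: there exists a bijective arrangement f with f(a) = p, f(b) = q, f(X) = Y, f(V(H)) = V(C), mapping every edge of the complement of H to a non-edge of C, and f is not t-equivalent to the constant arrangement mapping everything to p. -/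

import Mathlib

/-- An arrangement of agents (vertices of `GA`) into countries (vertices of `GM`):
every nonempty preimage induces a connected subgraph of `GA`. -/
def IsArrangement {A M : Type*} (GA : SimpleGraph A) (f : A → M) : Prop :=
  ∀ c : M, (f ⁻¹' {c}).Nonempty → (GA.induce (f ⁻¹' {c})).Connected

/-- An AAP transfer: a set `U` of agents of country `s` is moved along an edge
`st` of `GM` to country `t`; each of `GA[U]`, `GA[f⁻¹(s) \ U]`, `GA[f⁻¹(t) ∪ U]`
is connected or empty, and `f⁻¹({s,t}) \ U ≠ ∅`. -/
def Transfer {A M : Type*} (GA : SimpleGraph A) (GM : SimpleGraph M)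
    (f g : A → M) : Prop :=
  ∃ (s t : M) (U : Set A), GM.Adj s t ∧ U ⊆ f ⁻¹' {s} ∧
    (U = ∅ ∨ (GA.induce U).Connected) ∧
    (f ⁻¹' {s} \ U = ∅ ∨ (GA.induce (f ⁻¹' {s} \ U)).Connected) ∧
    (f ⁻¹' {t} ∪ U = ∅ ∨ (GA.induce (f ⁻¹' {t} ∪ U)).Connected) ∧
    (f ⁻¹' {s, t} \ U).Nonempty ∧
    (∀ x ∈ U, g x = t) ∧ (∀ x, x ∉ U → g x = f x)

/-- t-equivalence: related by a finite sequence of transfers. -/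
def TEquiv {A M : Type*} (GA : SimpleGraph A) (GM : SimpleGraph M)
    (f g : A → M) : Prop :=
  Relation.ReflTransGen (Transfer GA GM) f g

/-- A SUBNET MERGER along an edge `st` of `GM`: all agents of `s` are merged into
country `t`, where `f⁻¹(s) ≠ ∅`, `|f⁻¹({s,t})| ≥ 2` and `GA[f⁻¹({s,t})]` is
connected. -/
def SubnetMerger {A M : Type*} (GA : SimpleGraph A) (GM : SimpleGraph M)
    (f g : A → M) : Prop :=
  ∃ s t : M, GM.Adj s t ∧ (f ⁻¹' {s}).Nonempty ∧
    2 ≤ (f ⁻¹' ({s, t} : Set M)).ncard ∧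
    (GA.induce (f ⁻¹' ({s, t} : Set M))).Connected ∧
    (∀ x, f x ∈ ({s, t} : Set M) → g x = t) ∧
    (∀ x, f x ∉ ({s, t} : Set M) → g x = f x)

/-- The number of pebbles of the configuration associated with an arrangement:
the number of countries holding at least two agents. -/
noncomputable def pebCount {A M : Type*} (f : A → M) : ℕ :=
  {c : M | 2 ≤ (f ⁻¹' {c}).ncard}.ncard

/-- `g` is an `f`-irreducible arrangement: it is t-equivalent to `f` and its
associated configuration has the minimum possible number of pebbles. -/
def IsIrreducibleFor {A M : Type*} (GA : SimpleGraph A) (GM : SimpleGraph M)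
    (f g : A → M) : Prop :=
  TEquiv GA GM f g ∧ ∀ h : A → M, TEquiv GA GM f h → pebCount g ≤ pebCount h

/-- The agent network `G_A` of the reduction: vertices are `V(H) ∪ X ∪ {a,b}`
(coded `Sum.inl h`, `Sum.inr (Sum.inl x)`, `a = Sum.inr (Sum.inr 0)`,
`b = Sum.inr (Sum.inr 1)`), with the edges of the complement of `H`, all pairs
inside `X`, all edges from `a` to `V(H) ∪ X`, and all edges from `b` to `V(H)`. -/
def agentGraph {V : Type*} (H : SimpleGraph V) : SimpleGraph (V ⊕ V ⊕ Fin 2) :=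
  SimpleGraph.fromRel (fun u w =>
    match u, w with
    | Sum.inl x, Sum.inl y => x ≠ y ∧ ¬ H.Adj x y
    | Sum.inr (Sum.inl x), Sum.inr (Sum.inl y) => x ≠ y
    | Sum.inr (Sum.inr _), Sum.inl _ => True
    | Sum.inr (Sum.inr i), Sum.inr (Sum.inl _) => i = 0
    | _, _ => False)

/-- The route map `G_M` of the reduction: vertices are `V(C) ∪ Y ∪ {p,q}` where `C`
is an `n`-cycle (coded `Sum.inl (c : ZMod n)`), `Y` a set of `n` vertices
(`Sum.inr (Sum.inl y)`), `p = Sum.inr (Sum.inr 0)`, `q = Sum.inr (Sum.inr 1)`;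
edges: the cycle `C`, all pairs inside `Y`, all pairs between `Y` and
`V(C) ∪ {q}`, and the edge `{p,q}`. -/
def routeGraph (n : ℕ) (V : Type*) : SimpleGraph (ZMod n ⊕ V ⊕ Fin 2) :=
  SimpleGraph.fromRel (fun u w =>
    match u, w with
    | Sum.inl x, Sum.inl y => x = y + 1 ∨ y = x + 1
    | Sum.inr (Sum.inl x), Sum.inr (Sum.inl y) => x ≠ y
    | Sum.inr (Sum.inl _), Sum.inl _ => True
    | Sum.inr (Sum.inl _), Sum.inr (Sum.inr i) => i = 1
    | Sum.inr (Sum.inr i), Sum.inr (Sum.inr j) => i = 0 ∧ j = 1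
    | _, _ => False)

section Aux

open SimpleGraph

/-- A connected induced subgraph containing an isolated vertex is that vertex alone. -/
lemma fin2_cases (i : Fin 2) : i = 0 ∨ i = 1 :=
  match i with
  | 0 => Or.inl rfl
  | 1 => Or.inr rfl

lemma eq_of_isolated {A : Type*} (G : SimpleGraph A) {S : Set A} {v : A} (hv : v ∈ S)
    (hiso : ∀ u ∈ S, ¬ G.Adj v u) (hc : (G.induce S).Connected) :
    ∀ w ∈ S, w = v := by
  intro w hw
  obtain ⟨p⟩ := hc.preconnected ⟨v, hv⟩ ⟨w, hw⟩
  cases p with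
  | nil => rfl
  | @cons _ b _ h q => exact absurd h (hiso b.1 b.2)

lemma induce_connected_of_subsingleton {A : Type*} (G : SimpleGraph A) {S : Set A}
    (hS : S.Subsingleton) (hne : S.Nonempty) : (G.induce S).Connected := by
  obtain ⟨v, hv⟩ := hne
  have : Nonempty S := ⟨⟨v, hv⟩⟩
  refine ⟨fun u w => ?_⟩
  have : u = w := Subtype.ext (hS u.2 w.2)
  rw [this]

section Agent

variable {V : Type*} {H : SimpleGraph V}

lemma agent_not_adj_hx (x y : V) :
    ¬ (agentGraph H).Adj (Sum.inl x) (Sum.inr (Sum.inl y)) := by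
  simp [agentGraph, SimpleGraph.fromRel_adj]

lemma agent_not_adj_ab (i j : Fin 2) :
    ¬ (agentGraph H).Adj (Sum.inr (Sum.inr i)) (Sum.inr (Sum.inr j)) := by
  simp [agentGraph, SimpleGraph.fromRel_adj]

lemma agent_not_adj_bx (x : V) :
    ¬ (agentGraph H).Adj (Sum.inr (Sum.inr 1)) (Sum.inr (Sum.inl x)) := by
  simp [agentGraph, SimpleGraph.fromRel_adj]

lemma agent_adj_hh (x y : V) :
    (agentGraph H).Adj (Sum.inl x) (Sum.inl y) ↔ x ≠ y ∧ ¬ H.Adj x y := by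
  constructor
  · rintro ⟨hne, h | h⟩
    · exact h
    · exact ⟨fun e => h.1 e.symm, fun e => h.2 (H.adj_symm e)⟩
  · intro h; exact ⟨by simpa using h.1, Or.inl h⟩

lemma agent_adj_ah (h : V) :
    (agentGraph H).Adj (Sum.inr (Sum.inr 0)) (Sum.inl h) := by
  simp [agentGraph, SimpleGraph.fromRel_adj]

lemma agent_adj_bh (h : V) :
    (agentGraph H).Adj (Sum.inr (Sum.inr 1)) (Sum.inl h) := by
  simp [agentGraph, SimpleGraph.fromRel_adj]

lemma agent_adj_ax (x : V) :
    (agentGraph H).Adj (Sum.inr (Sum.inr 0)) (Sum.inr (Sum.inl x)) := by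
  simp [agentGraph, SimpleGraph.fromRel_adj]

lemma agent_connected [Nonempty V] : (agentGraph H).Connected := by
  obtain ⟨h₀⟩ := ‹Nonempty V›
  have hub : ∀ α, (agentGraph H).Reachable α (Sum.inr (Sum.inr 0)) := by
    intro α
    rcases α with h | x | i
    · exact (agent_adj_ah h).symm.reachable
    · exact (agent_adj_ax x).symm.reachable
    · rcases fin2_cases i with rfl | rfl
      · rfl
      · exact ((agent_adj_bh h₀).reachable).trans (agent_adj_ah h₀).symm.reachable
  have : Nonempty (V ⊕ V ⊕ Fin 2) := ⟨Sum.inr (Sum.inr 0)⟩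
  exact ⟨fun u v => (hub u).trans (hub v).symm⟩

end Agent

section Route

variable {n : ℕ} {V : Type*}

lemma route_nbr_c (c : ZMod n) (t : ZMod n ⊕ V ⊕ Fin 2)
    (h : (routeGraph n V).Adj (Sum.inl c) t) :
    (∃ c', t = Sum.inl c' ∧ c ≠ c' ∧ (c = c' + 1 ∨ c' = c + 1)) ∨
      (∃ y, t = Sum.inr (Sum.inl y)) := by
  rcases t with c' | y | i
  · left
    refine ⟨c', rfl, ?_, ?_⟩
    · simpa using h.ne
    · rcases h with ⟨-, h | h⟩
      · exact h
      · tauto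
  · right; exact ⟨y, rfl⟩
  · exfalso; revert h; simp [routeGraph, SimpleGraph.fromRel_adj]

lemma route_nbr_p (t : ZMod n ⊕ V ⊕ Fin 2)
    (h : (routeGraph n V).Adj (Sum.inr (Sum.inr 0)) t) : t = Sum.inr (Sum.inr 1) := by
  rcases t with c' | y | i
  · exfalso; revert h; simp [routeGraph, SimpleGraph.fromRel_adj]
  · exfalso; revert h; simp [routeGraph, SimpleGraph.fromRel_adj]
  · revert h; simp [routeGraph, SimpleGraph.fromRel_adj]

lemma route_nbr_q (t : ZMod n ⊕ V ⊕ Fin 2)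
    (h : (routeGraph n V).Adj (Sum.inr (Sum.inr 1)) t) :
    t = Sum.inr (Sum.inr 0) ∨ ∃ y, t = Sum.inr (Sum.inl y) := by
  rcases t with c' | y | i
  · exfalso; revert h; simp [routeGraph, SimpleGraph.fromRel_adj]
  · right; exact ⟨y, rfl⟩
  · left; revert h; simp [routeGraph, SimpleGraph.fromRel_adj]

lemma route_nbr_y (y : V) (t : ZMod n ⊕ V ⊕ Fin 2)
    (h : (routeGraph n V).Adj (Sum.inr (Sum.inl y)) t) :
    (∃ c, t = Sum.inl c) ∨ (∃ y', t = Sum.inr (Sum.inl y')) ∨ t = Sum.inr (Sum.inr 1) := by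
  rcases t with c' | y' | i
  · exact Or.inl ⟨c', rfl⟩
  · exact Or.inr (Or.inl ⟨y', rfl⟩)
  · right; right
    revert h; simp [routeGraph, SimpleGraph.fromRel_adj]

lemma route_adj_cc (c c' : ZMod n) :
    (routeGraph n V).Adj (Sum.inl c) (Sum.inl c') ↔
      c ≠ c' ∧ (c = c' + 1 ∨ c' = c + 1) := by
  constructor
  · intro h
    rcases route_nbr_c c _ h with ⟨c'', he, h1, h2⟩ | ⟨y, hy⟩
    · cases he; exact ⟨h1, h2⟩
    · simp at hy
  · rintro ⟨h1, h2⟩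
    exact ⟨by simpa using h1, Or.inl h2⟩

end Route

/-- The invariant (renamed) preserved by transfers, starting from the Hamiltonian arrangement. -/
def InvP {V : Type*} (n : ℕ) [NeZero n] (τ : V → ZMod n)
    (g : (V ⊕ V ⊕ Fin 2) → (ZMod n ⊕ V ⊕ Fin 2)) : Prop :=
  (∀ h, g (Sum.inl h) = Sum.inl (τ h)) ∧
  g (Sum.inr (Sum.inr 0)) = Sum.inr (Sum.inr 0) ∧
  g (Sum.inr (Sum.inr 1)) = Sum.inr (Sum.inr 1) ∧
  ∀ x, ∃ y, g (Sum.inr (Sum.inl x)) = Sum.inr (Sum.inl y)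

lemma inv_step {V : Type*} {H : SimpleGraph V} {n : ℕ} [NeZero n]
    {σ : ZMod n → V} {τ : V → ZMod n}
    (hστ : ∀ c, τ (σ c) = c) (hτσ : ∀ h, σ (τ h) = h)
    (hadj : ∀ c, H.Adj (σ c) (σ (c + 1)))
    {g g' : (V ⊕ V ⊕ Fin 2) → (ZMod n ⊕ V ⊕ Fin 2)}
    (hg : InvP n τ g) (ht : Transfer (agentGraph H) (routeGraph n V) g g') :
    InvP n τ g' := by
  obtain ⟨hH, ha, hb, hX⟩ := hg
  obtain ⟨s, t, U, hst, hUs, _hU, _hsrc, htgt, hne, hg1, hg2⟩ := ht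
  -- preimage computations
  have hpreC : ∀ c : ZMod n, g ⁻¹' {Sum.inl c} = {Sum.inl (σ c)} := by
    intro c
    ext α
    simp only [Set.mem_preimage, Set.mem_singleton_iff]
    constructor
    · rcases α with h | x | i
      · rw [hH h]
        intro e
        have : τ h = c := by exact Sum.inl.inj e
        rw [← this, hτσ]
      · obtain ⟨y, hy⟩ := hX x
        rw [hy]; intro e; exact absurd e (by simp)
      · rcases fin2_cases i with rfl | rfl
        · rw [ha]; intro e; exact absurd e (by simp)
        · rw [hb]; intro e; exact absurd e (by simp)
    · rintro rfl; rw [hH, hστ]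
  have hpreP : g ⁻¹' {Sum.inr (Sum.inr 0)} = {Sum.inr (Sum.inr 0)} := by
    ext α
    simp only [Set.mem_preimage, Set.mem_singleton_iff]
    constructor
    · rcases α with h | x | i
      · rw [hH h]; intro e; exact absurd e (by simp)
      · obtain ⟨y, hy⟩ := hX x
        rw [hy]; intro e; exact absurd e (by simp)
      · rcases fin2_cases i with rfl | rfl
        · intro _; rfl
        · rw [hb]; intro e; exact absurd e (by simp [Fin.ext_iff])
    · rintro rfl; exact ha
  have hpreQ : g ⁻¹' {Sum.inr (Sum.inr 1)} = {Sum.inr (Sum.inr 1)} := by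
    ext α
    simp only [Set.mem_preimage, Set.mem_singleton_iff]
    constructor
    · rcases α with h | x | i
      · rw [hH h]; intro e; exact absurd e (by simp)
      · obtain ⟨y, hy⟩ := hX x
        rw [hy]; intro e; exact absurd e (by simp)
      · rcases fin2_cases i with rfl | rfl
        · rw [ha]; intro e; exact absurd e (by simp [Fin.ext_iff])
        · intro _; rfl
    · rintro rfl; exact hb
  have hpreY : ∀ (y : V) (α), g α = Sum.inr (Sum.inl y) → ∃ x, α = Sum.inr (Sum.inl x) := by
    intro y α hα
    rcases α with h | x | i
    · rw [hH h] at hα; exact absurd hα (by simp)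
    · exact ⟨x, rfl⟩
    · rcases fin2_cases i with rfl | rfl
      · rw [ha] at hα; exact absurd hα (by simp)
      · rw [hb] at hα; exact absurd hα (by simp [Fin.ext_iff])
  -- the key claim: only X-agents can be moved, and only to Y-countries
  have key : ∀ α ∈ U, (∃ x, α = Sum.inr (Sum.inl x)) ∧ ∃ y, t = Sum.inr (Sum.inl y) := by
    intro α hαU
    have hαs : g α = s := hUs hαU
    rcases α with h | x | i
    · -- an H-agent cannot move
      exfalso
      have hs : s = Sum.inl (τ h) := by rw [← hαs, hH h]
      subst hs
      have hUsub : U ⊆ {Sum.inl h} := by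
        intro β hβ
        have := hUs hβ
        rw [hpreC] at this
        simpa [hτσ] using this
      rcases route_nbr_c _ _ hst with ⟨c', rfl, hcne, hrel⟩ | ⟨y, rfl⟩
      · -- moving along the cycle: target occupant is H-adjacent
        have hHadj : H.Adj h (σ c') := by
          rcases hrel with h1 | h2
          · have := hadj c'
            rw [← h1, hτσ] at this
            exact this.symm
          · have := hadj (τ h)
            rw [hτσ, ← h2] at this
            exact this
        rcases htgt with hemp | hconn
        · have : Sum.inl h ∈ g ⁻¹' {Sum.inl c'} ∪ U := Or.inr hαU
          rw [hemp] at this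
          exact this
        · have hvS : (Sum.inl h : V ⊕ V ⊕ Fin 2) ∈ g ⁻¹' {Sum.inl c'} ∪ U := Or.inr hαU
          have hiso : ∀ u ∈ g ⁻¹' {Sum.inl c'} ∪ U, ¬ (agentGraph H).Adj (Sum.inl h) u := by
            intro u hu
            rcases hu with hu | hu
            · rw [hpreC] at hu
              rw [hu]
              rw [agent_adj_hh]
              rintro ⟨-, hnadj⟩
              exact hnadj hHadj
            · rw [hUsub hu]
              exact (agentGraph H).irrefl
          have := eq_of_isolated _ hvS hiso hconn (Sum.inl (σ c'))
            (Or.inl (by rw [hpreC]; rfl))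
          have hcc : σ c' = h := Sum.inl.inj this
          apply hcne
          rw [← hcc, hστ]
      · -- moving to a Y-country
        rcases eq_or_ne (g ⁻¹' {(Sum.inr (Sum.inl y) : ZMod n ⊕ V ⊕ Fin 2)}) ∅ with hemp | hney
        · obtain ⟨β, hβ1, hβ2⟩ := hne
          rcases hβ1 with hβs | hβt
          · have : β ∈ g ⁻¹' {Sum.inl (τ h)} := hβs
            rw [hpreC] at this
            rw [hτσ] at this
            apply hβ2
            rw [this]
            exact hαU
          · have : β ∈ g ⁻¹' {(Sum.inr (Sum.inl y) : ZMod n ⊕ V ⊕ Fin 2)} := hβt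
            rw [hemp] at this
            exact this
        · obtain ⟨β, hβ⟩ := Set.nonempty_iff_ne_empty.mpr hney
          obtain ⟨x, rfl⟩ := hpreY y β hβ
          rcases htgt with hemp | hconn
          · have : Sum.inl h ∈ g ⁻¹' {(Sum.inr (Sum.inl y) : ZMod n ⊕ V ⊕ Fin 2)} ∪ U :=
              Or.inr hαU
            rw [hemp] at this
            exact this
          · have hvS : (Sum.inl h : V ⊕ V ⊕ Fin 2) ∈
                g ⁻¹' {(Sum.inr (Sum.inl y) : ZMod n ⊕ V ⊕ Fin 2)} ∪ U := Or.inr hαU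
            have hiso : ∀ u ∈ g ⁻¹' {(Sum.inr (Sum.inl y) : ZMod n ⊕ V ⊕ Fin 2)} ∪ U,
                ¬ (agentGraph H).Adj (Sum.inl h) u := by
              intro u hu
              rcases hu with hu | hu
              · obtain ⟨x', rfl⟩ := hpreY y u hu
                exact agent_not_adj_hx h x'
              · rw [hUsub hu]
                exact (agentGraph H).irrefl
            have := eq_of_isolated _ hvS hiso hconn _ (Or.inl hβ)
            exact absurd this (by simp)
    · -- an X-agent: must move to a Y-country
      refine ⟨⟨x, rfl⟩, ?_⟩
      obtain ⟨y, hy⟩ := hX x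
      have hs : s = Sum.inr (Sum.inl y) := by rw [← hαs, hy]
      subst hs
      have hUsub : ∀ β ∈ U, ∃ x', β = Sum.inr (Sum.inl x') := by
        intro β hβ
        exact hpreY y β (hUs hβ)
      rcases route_nbr_y _ _ hst with ⟨c, rfl⟩ | ⟨y', rfl⟩ | rfl
      · -- to a cycle country: impossible
        exfalso
        rcases htgt with hemp | hconn
        · have : Sum.inr (Sum.inl x) ∈ g ⁻¹' {Sum.inl c} ∪ U := Or.inr hαU
          rw [hemp] at this
          exact this
        · have hvS : (Sum.inl (σ c) : V ⊕ V ⊕ Fin 2) ∈ g ⁻¹' {Sum.inl c} ∪ U :=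
            Or.inl (by rw [hpreC]; rfl)
          have hiso : ∀ u ∈ g ⁻¹' {Sum.inl c} ∪ U,
              ¬ (agentGraph H).Adj (Sum.inl (σ c)) u := by
            intro u hu
            rcases hu with hu | hu
            · rw [hpreC] at hu
              rw [hu]
              exact (agentGraph H).irrefl
            · obtain ⟨x', rfl⟩ := hUsub u hu
              exact agent_not_adj_hx (σ c) x'
          have := eq_of_isolated _ hvS hiso hconn _ (Or.inr hαU)
          exact absurd this (by simp)
      · exact ⟨y', rfl⟩
      · -- to country q: impossible
        exfalso
        rcases htgt with hemp | hconn
        · have : Sum.inr (Sum.inl x) ∈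
              g ⁻¹' {(Sum.inr (Sum.inr 1) : ZMod n ⊕ V ⊕ Fin 2)} ∪ U := Or.inr hαU
          rw [hemp] at this
          exact this
        · have hvS : (Sum.inr (Sum.inr 1) : V ⊕ V ⊕ Fin 2) ∈
              g ⁻¹' {(Sum.inr (Sum.inr 1) : ZMod n ⊕ V ⊕ Fin 2)} ∪ U :=
            Or.inl (by rw [hpreQ]; rfl)
          have hiso : ∀ u ∈ g ⁻¹' {(Sum.inr (Sum.inr 1) : ZMod n ⊕ V ⊕ Fin 2)} ∪ U,
              ¬ (agentGraph H).Adj (Sum.inr (Sum.inr 1)) u := by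
            intro u hu
            rcases hu with hu | hu
            · rw [hpreQ] at hu
              rw [hu]
              exact (agentGraph H).irrefl
            · obtain ⟨x', rfl⟩ := hUsub u hu
              exact agent_not_adj_bx x'
          have := eq_of_isolated _ hvS hiso hconn _ (Or.inr hαU)
          exact absurd this (by simp)
    · -- agents a and b cannot move
      exfalso
      rcases fin2_cases i with rfl | rfl
      · -- agent a
        have hs : s = Sum.inr (Sum.inr 0) := by rw [← hαs, ha]
        subst hs
        have hUsub : U ⊆ {Sum.inr (Sum.inr 0)} := by
          intro β hβ
          have := hUs hβ
          rw [hpreP] at this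
          exact this
        have htq : t = Sum.inr (Sum.inr 1) := route_nbr_p _ hst
        subst htq
        rcases htgt with hemp | hconn
        · have : (Sum.inr (Sum.inr 0) : V ⊕ V ⊕ Fin 2) ∈
              g ⁻¹' {(Sum.inr (Sum.inr 1) : ZMod n ⊕ V ⊕ Fin 2)} ∪ U := Or.inr hαU
          rw [hemp] at this
          exact this
        · have hvS : (Sum.inr (Sum.inr 0) : V ⊕ V ⊕ Fin 2) ∈
              g ⁻¹' {(Sum.inr (Sum.inr 1) : ZMod n ⊕ V ⊕ Fin 2)} ∪ U := Or.inr hαU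
          have hiso : ∀ u ∈ g ⁻¹' {(Sum.inr (Sum.inr 1) : ZMod n ⊕ V ⊕ Fin 2)} ∪ U,
              ¬ (agentGraph H).Adj (Sum.inr (Sum.inr 0)) u := by
            intro u hu
            rcases hu with hu | hu
            · rw [hpreQ] at hu
              rw [hu]
              exact agent_not_adj_ab 0 1
            · rw [hUsub hu]
              exact (agentGraph H).irrefl
          have := eq_of_isolated _ hvS hiso hconn (Sum.inr (Sum.inr 1))
            (Or.inl (by rw [hpreQ]; rfl))
          exact absurd this (by simp [Fin.ext_iff])
      · -- agent b
        have hs : s = Sum.inr (Sum.inr 1) := by rw [← hαs, hb]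
        subst hs
        have hUsub : U ⊆ {Sum.inr (Sum.inr 1)} := by
          intro β hβ
          have := hUs hβ
          rw [hpreQ] at this
          exact this
        rcases route_nbr_q _ hst with rfl | ⟨y, rfl⟩
        · rcases htgt with hemp | hconn
          · have : (Sum.inr (Sum.inr 1) : V ⊕ V ⊕ Fin 2) ∈
                g ⁻¹' {(Sum.inr (Sum.inr 0) : ZMod n ⊕ V ⊕ Fin 2)} ∪ U := Or.inr hαU
            rw [hemp] at this
            exact this
          · have hvS : (Sum.inr (Sum.inr 1) : V ⊕ V ⊕ Fin 2) ∈
                g ⁻¹' {(Sum.inr (Sum.inr 0) : ZMod n ⊕ V ⊕ Fin 2)} ∪ U := Or.inr hαU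
            have hiso : ∀ u ∈ g ⁻¹' {(Sum.inr (Sum.inr 0) : ZMod n ⊕ V ⊕ Fin 2)} ∪ U,
                ¬ (agentGraph H).Adj (Sum.inr (Sum.inr 1)) u := by
              intro u hu
              rcases hu with hu | hu
              · rw [hpreP] at hu
                rw [hu]
                exact agent_not_adj_ab 1 0
              · rw [hUsub hu]
                exact (agentGraph H).irrefl
            have := eq_of_isolated _ hvS hiso hconn (Sum.inr (Sum.inr 0))
              (Or.inl (by rw [hpreP]; rfl))
            exact absurd this (by simp [Fin.ext_iff])
        · rcases eq_or_ne (g ⁻¹' {(Sum.inr (Sum.inl y) : ZMod n ⊕ V ⊕ Fin 2)}) ∅ with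
            hemp | hney
          · obtain ⟨β, hβ1, hβ2⟩ := hne
            rcases hβ1 with hβs | hβt
            · have : β ∈ g ⁻¹' {(Sum.inr (Sum.inr 1) : ZMod n ⊕ V ⊕ Fin 2)} := hβs
              rw [hpreQ] at this
              apply hβ2
              rw [this]
              exact hαU
            · have : β ∈ g ⁻¹' {(Sum.inr (Sum.inl y) : ZMod n ⊕ V ⊕ Fin 2)} := hβt
              rw [hemp] at this
              exact this
          · obtain ⟨β, hβ⟩ := Set.nonempty_iff_ne_empty.mpr hney
            obtain ⟨x, rfl⟩ := hpreY y β hβ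
            rcases htgt with hemp | hconn
            · have : (Sum.inr (Sum.inr 1) : V ⊕ V ⊕ Fin 2) ∈
                  g ⁻¹' {(Sum.inr (Sum.inl y) : ZMod n ⊕ V ⊕ Fin 2)} ∪ U := Or.inr hαU
              rw [hemp] at this
              exact this
            · have hvS : (Sum.inr (Sum.inr 1) : V ⊕ V ⊕ Fin 2) ∈
                  g ⁻¹' {(Sum.inr (Sum.inl y) : ZMod n ⊕ V ⊕ Fin 2)} ∪ U := Or.inr hαU
              have hiso : ∀ u ∈ g ⁻¹' {(Sum.inr (Sum.inl y) : ZMod n ⊕ V ⊕ Fin 2)} ∪ U,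
                  ¬ (agentGraph H).Adj (Sum.inr (Sum.inr 1)) u := by
                intro u hu
                rcases hu with hu | hu
                · obtain ⟨x', rfl⟩ := hpreY y u hu
                  exact agent_not_adj_bx x'
                · rw [hUsub hu]
                  exact (agentGraph H).irrefl
              have := eq_of_isolated _ hvS hiso hconn _ (Or.inl hβ)
              exact absurd this (by simp)
  -- conclude the invariant for g'
  classical
  refine ⟨?_, ?_, ?_, ?_⟩
  · intro h
    by_cases hU : Sum.inl h ∈ U
    · obtain ⟨⟨x, hx⟩, -⟩ := key _ hU
      exact absurd hx (by simp)
    · rw [hg2 _ hU]; exact hH h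
  · by_cases hU : (Sum.inr (Sum.inr 0) : V ⊕ V ⊕ Fin 2) ∈ U
    · obtain ⟨⟨x, hx⟩, -⟩ := key _ hU
      exact absurd hx (by simp)
    · rw [hg2 _ hU]; exact ha
  · by_cases hU : (Sum.inr (Sum.inr 1) : V ⊕ V ⊕ Fin 2) ∈ U
    · obtain ⟨⟨x, hx⟩, -⟩ := key _ hU
      exact absurd hx (by simp [Fin.ext_iff])
    · rw [hg2 _ hU]; exact hb
  · intro x
    by_cases hU : (Sum.inr (Sum.inl x) : V ⊕ V ⊕ Fin 2) ∈ U
    · obtain ⟨-, y, hy⟩ := key _ hU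
      exact ⟨y, by rw [hg1 _ hU, hy]⟩
    · rw [hg2 _ hU]; exact hX x

end Aux

/-- If `H` has a Hamiltonian circuit, then the pair `(G_A, G_M)` of the reduction
is not almighty: there is a bijective arrangement `f` with `f(a) = p`, `f(b) = q`,
`f(X) = Y`, `f(V(H)) = V(C)`, sending every edge of the complement of `H` to a
non-edge of `G_M`, which is not t-equivalent to the constant arrangement at `p`. -/


theorem hamiltonian_implies_not_almighty {V : Type*} [Fintype V] [DecidableEq V]
    (H : SimpleGraph V) (n : ℕ) [NeZero n]
    (hn : Fintype.card V = n) (h3 : 3 ≤ n)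
    (hham : ∃ (u : V) (w : H.Walk u u), w.IsHamiltonianCycle) :
    (¬ ∀ f g : (V ⊕ V ⊕ Fin 2) → (ZMod n ⊕ V ⊕ Fin 2),
        IsArrangement (agentGraph H) f → IsArrangement (agentGraph H) g →
        TEquiv (agentGraph H) (routeGraph n V) f g) ∧
    ∃ f : (V ⊕ V ⊕ Fin 2) → (ZMod n ⊕ V ⊕ Fin 2),
      IsArrangement (agentGraph H) f ∧ Function.Bijective f ∧
      f (Sum.inr (Sum.inr 0)) = Sum.inr (Sum.inr 0) ∧
      f (Sum.inr (Sum.inr 1)) = Sum.inr (Sum.inr 1) ∧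
      Set.range (fun x : V => f (Sum.inr (Sum.inl x)))
        = Set.range (fun y : V => (Sum.inr (Sum.inl y) : ZMod n ⊕ V ⊕ Fin 2)) ∧
      Set.range (fun x : V => f (Sum.inl x))
        = Set.range (fun c : ZMod n => (Sum.inl c : ZMod n ⊕ V ⊕ Fin 2)) ∧
      (∀ x y : V, x ≠ y → ¬ H.Adj x y →
        ¬ (routeGraph n V).Adj (f (Sum.inl x)) (f (Sum.inl y))) ∧
      ¬ TEquiv (agentGraph H) (routeGraph n V) f
          (fun _ => Sum.inr (Sum.inr 0)) := by
  classical
  obtain ⟨u, w, hw⟩ := hham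
  -- construct the cyclic ordering from the Hamiltonian cycle
  obtain ⟨σ, hbij, hadj⟩ :
      ∃ σ : ZMod n → V, Function.Bijective σ ∧ ∀ c : ZMod n, H.Adj (σ c) (σ (c + 1)) := by
    have hlen : w.length = n := hn ▸ hw.length_eq
    set σ : ZMod n → V := fun c => w.getVert c.val with hσ
    have hn1 : 1 < n := by omega
    have hsurj : Function.Surjective σ := by
      intro v
      obtain ⟨m, hm, hmle⟩ :=
        SimpleGraph.Walk.mem_support_iff_exists_getVert.mp (hw.mem_support v)
      rw [hlen] at hmle
      rcases eq_or_lt_of_le hmle with rfl | hlt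
      · exact ⟨0, by simp [hσ, ZMod.val_zero, ← hm, ← hlen]⟩
      · exact ⟨(m : ZMod n), by simp [hσ, ZMod.val_cast_of_lt hlt, hm]⟩
    refine ⟨σ, ?_, ?_⟩
    · rw [Fintype.bijective_iff_surjective_and_card]
      exact ⟨hsurj, by simp [ZMod.card, hn]⟩
    · intro c
      have hv : c.val < n := c.val_lt
      have hadj : H.Adj (w.getVert c.val) (w.getVert (c.val + 1)) :=
        w.adj_getVert_succ (by omega)
      have h1 : (1 : ZMod n).val = 1 := ZMod.val_one_eq_one_mod n ▸ Nat.mod_eq_of_lt hn1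
      have hval : (c + 1).val = (c.val + 1) % n := by rw [ZMod.val_add, h1]
      rcases eq_or_lt_of_le (Nat.succ_le_of_lt hv) with he | hlt
      · rw [Nat.succ_eq_add_one] at he
        have hz : (c + 1).val = 0 := by rw [hval, he, Nat.mod_self]
        have h0 : σ (c + 1) = u := by simp [hσ, hz]
        have hn' : w.getVert (c.val + 1) = u := by
          rw [he, ← hlen]; exact w.getVert_length
        rw [h0, ← hn']; exact hadj
      · rw [Nat.succ_eq_add_one] at hlt
        have hz : (c + 1).val = c.val + 1 := by rw [hval, Nat.mod_eq_of_lt hlt]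
        show H.Adj (w.getVert c.val) (w.getVert (c + 1).val)
        rw [hz]; exact hadj
  set e : ZMod n ≃ V := Equiv.ofBijective σ hbij with he
  set τ : V → ZMod n := ⇑e.symm with hτ
  have hστ : ∀ c, τ (σ c) = c := fun c => e.symm_apply_apply c
  have hτσ : ∀ h, σ (τ h) = h := fun h => e.apply_symm_apply h
  set f : (V ⊕ V ⊕ Fin 2) → (ZMod n ⊕ V ⊕ Fin 2) := Sum.map τ id with hf
  have hfbij : Function.Bijective f :=
    Function.Bijective.sumMap e.symm.bijective Function.bijective_id
  have hV : Nonempty V := Fintype.card_pos_iff.mp (by omega)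
  have hInvf : InvP n τ f := ⟨fun h => rfl, rfl, rfl, fun x => ⟨x, rfl⟩⟩
  have harrf : IsArrangement (agentGraph H) f := by
    intro c hc
    apply induce_connected_of_subsingleton _ ?_ hc
    intro α hα β hβ
    exact hfbij.injective ((Set.mem_singleton_iff.mp hα).trans
      (Set.mem_singleton_iff.mp hβ).symm)
  have hmain : ¬ TEquiv (agentGraph H) (routeGraph n V) f (fun _ => Sum.inr (Sum.inr 0)) := by
    intro hTE
    have hallg : ∀ g, TEquiv (agentGraph H) (routeGraph n V) f g → InvP n τ g := by
      intro g hg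
      induction hg with
      | refl => exact hInvf
      | tail h1 step ih => exact inv_step hστ hτσ hadj ih step
    have hq := (hallg _ hTE).2.2.1
    simp only at hq
    have : (0 : Fin 2) = 1 := Sum.inr.inj (Sum.inr.inj hq)
    exact absurd this (by decide)
  have harrc : IsArrangement (agentGraph H)
      (fun _ : V ⊕ V ⊕ Fin 2 => (Sum.inr (Sum.inr 0) : ZMod n ⊕ V ⊕ Fin 2)) := by
    intro c hc
    obtain ⟨α, hα⟩ := hc
    have hcp : (Sum.inr (Sum.inr 0) : ZMod n ⊕ V ⊕ Fin 2) = c := hα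
    subst hcp
    have huniv : ((fun _ : V ⊕ V ⊕ Fin 2 =>
        (Sum.inr (Sum.inr 0) : ZMod n ⊕ V ⊕ Fin 2)) ⁻¹'
          {(Sum.inr (Sum.inr 0) : ZMod n ⊕ V ⊕ Fin 2)}) = Set.univ :=
      Set.eq_univ_of_forall (fun β => rfl)
    rw [huniv]
    exact (SimpleGraph.induceUnivIso (agentGraph H)).connected_iff.mpr agent_connected
  constructor
  · intro hall
    exact hmain (hall f _ harrf harrc)
  · refine ⟨f, harrf, hfbij, rfl, rfl, rfl, ?_, ?_, hmain⟩
    · ext m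
      simp only [Set.mem_range]
      constructor
      · rintro ⟨x, rfl⟩; exact ⟨τ x, rfl⟩
      · rintro ⟨c, rfl⟩; exact ⟨σ c, by show Sum.inl (τ (σ c)) = _; rw [hστ]⟩
    · intro x y hxy hnadj hradj
      have hfx : f (Sum.inl x) = Sum.inl (τ x) := rfl
      have hfy : f (Sum.inl y) = Sum.inl (τ y) := rfl
      rw [hfx, hfy, route_adj_cc] at hradj
      obtain ⟨-, hrel | hrel⟩ := hradj
      · have := hadj (τ y)
        rw [hτσ, ← hrel, hτσ] at this
        exact hnadj this.symm
      · have := hadj (τ x)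
        rw [hτσ, ← hrel, hτσ] at this
        exact hnadj this
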